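/- Suppose b ≥ 2, N ≥ 1, m ≥ 1, and F_{m+k} = b^t · F_m + r for integers k ≥ 1, 1 ≤ t ≤ N, and 0 ≤ r < b^t. Then k ≤ 1 + log_φ(2·b^N), where φ = (1+√5)/2. -/

import Mathlib

theorem fib_step_jump_index_bound (b N m k t r : ℕ)
    (hb : 2 ≤ b) (hN : 1 ≤ N) (hm : 1 ≤ m) (hk : 1 ≤ k)
    (ht1 : 1 ≤ t) (htN : t ≤ N) (hr : r < b ^ t)
    (hstep : Nat.fib (m + k) = b ^ t * Nat.fib m + r) :
    (k : ℝ) ≤ 1 + Real.logb ((1 + Real.sqrt 5) / 2) (2 * (b : ℝ) ^ N) := by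
  have hφ : ((1 + Real.sqrt 5) / 2 : ℝ) = Real.goldenRatio := rfl
  rw [hφ]
  have hgold := Real.one_lt_goldenRatio
  -- fib m positive
  have hfm : 1 ≤ Nat.fib m := Nat.fib_pos.mpr hm
  -- fib(m) * fib(k+1) ≤ fib(m+k)
  obtain ⟨m', rfl⟩ := Nat.exists_eq_add_of_le hm
  have hadd : Nat.fib (1 + m' + k) = Nat.fib m' * Nat.fib k + Nat.fib (m' + 1) * Nat.fib (k + 1) := by
    rw [show 1 + m' + k = m' + k + 1 by ring, Nat.fib_add]
  have hle1 : Nat.fib (1 + m') * Nat.fib (k + 1) ≤ Nat.fib (1 + m' + k) := by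
    rw [hadd, Nat.add_comm 1 m']
    exact Nat.le_add_left _ _
  -- fib(m+k) < 2 * b^N * fib m
  have hbt : b ^ t ≤ b ^ N := Nat.pow_le_pow_right (by omega) htN
  have hlt : Nat.fib (1 + m' + k) < 2 * b ^ N * Nat.fib (1 + m') := by
    have h1 : b ^ t ≤ b ^ t * Nat.fib (1 + m') := Nat.le_mul_of_pos_right _ (Nat.fib_pos.mpr hm)
    calc Nat.fib (1 + m' + k) = b ^ t * Nat.fib (1 + m') + r := hstep
      _ < b ^ t * Nat.fib (1 + m') + b ^ t := by omega
      _ ≤ 2 * (b ^ t * Nat.fib (1 + m')) := by omega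
      _ ≤ 2 * b ^ N * Nat.fib (1 + m') := by nlinarith [hbt, hfm]
  -- so fib(k+1) < 2 * b^N
  have hfk : Nat.fib (k + 1) < 2 * b ^ N := by
    have hposm := Nat.fib_pos.mpr hm
    nlinarith [hle1, hlt]
  -- φ^(k-1) ≤ fib(k+1)
  have hgpow : Real.goldenRatio ^ (k - 1) ≤ (Nat.fib (k + 1) : ℝ) := by
    have hexp := Real.goldenRatio_mul_fib_succ_add_fib k
    have hfle : (Nat.fib k : ℝ) ≤ (Nat.fib (k + 1) : ℝ) := by
      exact_mod_cast Nat.fib_le_fib_succ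
    have hsq : Real.goldenRatio ^ 2 = Real.goldenRatio + 1 := Real.goldenRatio_sq
    have hgp2 : (0:ℝ) < Real.goldenRatio ^ 2 := by positivity
    have h1 : Real.goldenRatio ^ 2 * Real.goldenRatio ^ (k - 1) ≤ Real.goldenRatio ^ 2 * (Nat.fib (k + 1) : ℝ) := by
      have heq : Real.goldenRatio ^ 2 * Real.goldenRatio ^ (k - 1) = Real.goldenRatio ^ (k + 1) := by
        rw [← pow_add]; congr 1; omega
      rw [heq, ← hexp, hsq]
      nlinarith [Real.goldenRatio_pos, (Nat.cast_nonneg (Nat.fib (k+1)) : (0:ℝ) ≤ _)]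
    exact le_of_mul_le_mul_left h1 hgp2
  -- combine: φ^(k-1) < 2 b^N
  have hfinal : Real.goldenRatio ^ (k - 1) < 2 * (b:ℝ) ^ N := by
    refine lt_of_le_of_lt hgpow ?_
    exact_mod_cast hfk
  -- take logs
  have hpos : (0:ℝ) < Real.goldenRatio ^ (k - 1) := by positivity
  have hlog : ((k - 1 : ℕ) : ℝ) ≤ Real.logb Real.goldenRatio (2 * (b:ℝ) ^ N) := by
    calc ((k - 1 : ℕ) : ℝ) = Real.logb Real.goldenRatio (Real.goldenRatio ^ (k - 1)) := by
          rw [Real.logb_pow, Real.logb_self_eq_one hgold]; ring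
      _ ≤ _ := Real.logb_le_logb_of_le hgold hpos hfinal.le
  have hcast : ((k - 1 : ℕ) : ℝ) = (k : ℝ) - 1 := by
    have : (1:ℕ) ≤ k := hk
    push_cast [Nat.cast_sub this]
    ring
  linarith [hcast ▸ hlog]
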